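/- Define a^k_λ for a partition λ ⊢ n as the coefficient of any permutation of cycle-type λ in h_k(J_1,...,J_n). Then for any partition ρ and k ≥ 1: a^k_{ρ∪(1)} = a^k_ρ + Σ_{i=1}^{ℓ(ρ)} ρ_i · a^{k-1}_{ρ\(ρ_i)∪(ρ_i+1)}. -/

import Mathlib

open Finset
open scoped Classical

/-- The Jucys-Murphy element `J_i = Σ_{j<i} (j i)` in the group algebra `ℤ[S_n]`. -/
noncomputable def JM (n : ℕ) (i : Fin n) : MonoidAlgebra ℤ (Equiv.Perm (Fin n)) :=
  ∑ j ∈ Finset.univ.filter (fun j : Fin n => j < i),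
    MonoidAlgebra.of ℤ (Equiv.Perm (Fin n)) (Equiv.swap j i)

/-- Evaluation of the complete homogeneous symmetric polynomial `h_k` at a family
of (pairwise commuting) elements: sum over weakly increasing sequences. -/
noncomputable def hEval {n : ℕ} {A : Type*} [Ring A] (k : ℕ) (g : Fin n → A) : A :=
  ∑ f ∈ Finset.univ.filter (fun f : Fin k → Fin n => Monotone f),
    (List.ofFn (fun t => g (f t))).prod

/-- The cycle type of a permutation including its fixed points (as parts equal to 1),
i.e. the partition of `n` recording all cycle lengths. -/
def fullCycleType {n : ℕ} (σ : Equiv.Perm (Fin n)) : Multiset ℕ :=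
  σ.cycleType + Multiset.replicate (n - σ.cycleType.sum) 1

/-- The coefficient of a group element in an element of the group algebra. -/
noncomputable def coeffOf {G : Type*} (x : MonoidAlgebra ℤ G) (g : G) : ℤ :=
  x.coeff g

section AuxLemmas
variable {α : Type*} [Fintype α] [DecidableEq α]

lemma cycle_join {c : Equiv.Perm α} (hc : c.IsCycle) {x y : α} (hx : x ∈ c.support)
    (hy : y ∉ c.support) :
    (c * Equiv.swap x y).IsCycle ∧ (c * Equiv.swap x y).support = insert y c.support := by
  set C := c * Equiv.swap x y with hC
  have hxy : x ≠ y := fun h => hy (h ▸ hx)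
  have hcy : c y = y := Equiv.Perm.notMem_support.mp hy
  have hcx : c x ≠ x := Equiv.Perm.mem_support.mp hx
  have hCapp : ∀ z, z ≠ x → z ≠ y → C z = c z := by
    intro z h1 h2
    simp [hC, Equiv.Perm.mul_apply, Equiv.swap_apply_of_ne_of_ne h1 h2]
  have hCx : C x = y := by simp [hC, Equiv.Perm.mul_apply, hcy]
  have hCy : C y = c x := by simp [hC, Equiv.Perm.mul_apply]
  have hsupp : C.support = insert y c.support := by
    ext z
    simp only [Finset.mem_insert, Equiv.Perm.mem_support]
    constructor
    · intro hz
      by_cases h1 : z = y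
      · exact Or.inl h1
      by_cases h2 : z = x
      · subst h2; exact Or.inr hcx
      · rw [hCapp z h2 h1] at hz; exact Or.inr hz
    · rintro (rfl | hz)
      · rw [hCy]; intro h
        exact hy (h ▸ Equiv.Perm.apply_mem_support.mpr hx)
      · by_cases h2 : z = x
        · subst h2; rw [hCx]; exact hxy.symm
        · have hzy : z ≠ y := fun h => hy (h ▸ Equiv.Perm.mem_support.mpr hz)
          rw [hCapp z h2 hzy]; exact hz
  have step : ∀ w, w ∈ c.support → C.SameCycle w (c w) := by
    intro w hw
    by_cases hwx : w = x
    · subst hwx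
      have h2 : c w = C (C w) := by rw [hCx, hCy]
      rw [h2]
      exact Equiv.Perm.sameCycle_apply_right.mpr
        (Equiv.Perm.sameCycle_apply_right.mpr (Equiv.Perm.SameCycle.refl _ _))
    · have hwy : w ≠ y := fun h => hy (h ▸ hw)
      rw [← hCapp w hwx hwy]
      exact Equiv.Perm.sameCycle_apply_right.mpr (Equiv.Perm.SameCycle.refl _ _)
  have chain : ∀ i : ℕ, C.SameCycle x ((c ^ i) x) := by
    intro i; induction i with
    | zero => simpa using Equiv.Perm.SameCycle.refl C x
    | succ i ih =>
      have hmem : (c ^ i) x ∈ c.support := Equiv.Perm.pow_apply_mem_support.mpr hx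
      have h2 := step _ hmem
      have h3 : (c ^ (i + 1)) x = c ((c ^ i) x) := by
        rw [pow_succ']; rfl
      rw [h3]
      exact ih.trans h2
  refine ⟨⟨x, by rw [hCx]; exact hxy.symm, ?_⟩, hsupp⟩
  intro z hz
  have hzsupp : z ∈ C.support := Equiv.Perm.mem_support.mpr hz
  rw [hsupp, Finset.mem_insert] at hzsupp
  rcases hzsupp with rfl | hzc
  · rw [← hCx]
    exact Equiv.Perm.sameCycle_apply_right.mpr (Equiv.Perm.SameCycle.refl _ _)
  · have hsc : c.SameCycle x z := hc.sameCycle hcx (Equiv.Perm.mem_support.mp hzc)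
    obtain ⟨i, -, -, hi⟩ := Equiv.Perm.SameCycle.exists_pow_eq c hsc
    rw [← hi]
    exact chain i


noncomputable def psize {n : ℕ} (σ : Equiv.Perm (Fin n)) (x : Fin n) : ℕ :=
  if σ x = x then 1 else (σ.cycleOf x).support.card

lemma fullCycleType_mul_swap {n : ℕ} {σ : Equiv.Perm (Fin n)} {x y : Fin n} (hxy : x ≠ y)
    (hy : σ y = y) {ρ : Multiset ℕ} (hρ : fullCycleType σ = 1 ::ₘ ρ) :
    fullCycleType (σ * Equiv.swap x y) = (psize σ x + 1) ::ₘ ρ.erase (psize σ x) := by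
  have hsumct : σ.cycleType.sum = σ.support.card := σ.sum_cycleType
  set s := σ.support.card with hsdef
  have hysupp : y ∉ σ.support := by simp [Equiv.Perm.mem_support, hy]
  have hslt : s < n := by
    have h1 : σ.support ⊂ univ := ⟨Finset.subset_univ _, fun h => hysupp (h (Finset.mem_univ y))⟩
    simpa using Finset.card_lt_card h1
  by_cases hx : σ x = x
  · -- x is a fixed point: disjoint product with the swap
    have hxsupp : x ∉ σ.support := by simp [Equiv.Perm.mem_support, hx]
    have hd : σ.Disjoint (Equiv.swap x y) := by
      intro a
      by_cases hax : a = x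
      · subst hax; exact Or.inl hx
      by_cases hay : a = y
      · subst hay; exact Or.inl hy
      · exact Or.inr (Equiv.swap_apply_of_ne_of_ne hax hay)
    have hctsw : (Equiv.swap x y).cycleType = {2} := by
      have h1 := (Equiv.Perm.isCycle_swap hxy).cycleType
      rwa [Equiv.Perm.card_support_swap hxy] at h1
    have hct : (σ * Equiv.swap x y).cycleType = σ.cycleType + {2} := by
      rw [hd.cycleType_mul, hctsw]
    have hs2 : s + 2 ≤ n := by
      have h1 : (insert x (insert y σ.support)).card ≤ n := by
        simpa using Finset.card_le_univ (insert x (insert y σ.support))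
      rwa [Finset.card_insert_of_notMem (by simp [hxy, hxsupp]),
        Finset.card_insert_of_notMem hysupp] at h1
    obtain ⟨t, ht⟩ : ∃ t, n - s = t + 2 := ⟨n - s - 2, by omega⟩
    have hρ' : ρ = 1 ::ₘ (σ.cycleType + Multiset.replicate t 1) := by
      rw [← Multiset.cons_inj_right (1:ℕ), ← hρ]
      unfold fullCycleType
      rw [hsumct, ht, Multiset.replicate_succ, Multiset.replicate_succ]
      simp only [← Multiset.singleton_add]
      abel
    have hq : psize σ x = 1 := if_pos hx
    rw [hq, hρ', Multiset.erase_cons_head]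
    unfold fullCycleType
    rw [hct]
    have h2 : (σ.cycleType + ({2} : Multiset ℕ)).sum = s + 2 := by
      rw [Multiset.sum_add, hsumct]; simp
    rw [h2]
    have h3 : n - (s + 2) = t := by omega
    rw [h3]
    have h4 : (1:ℕ) + 1 = 2 := rfl
    rw [h4]
    simp only [← Multiset.singleton_add]
    abel
  · -- x is moved : join its cycle with y
    set c := σ.cycleOf x with hc
    have hcyc : c.IsCycle := Equiv.Perm.isCycle_cycleOf σ hx
    have hxc : x ∈ c.support := by
      rw [hc, Equiv.Perm.mem_support_cycleOf_iff]
      exact ⟨Equiv.Perm.SameCycle.refl _ _, Equiv.Perm.mem_support.mpr hx⟩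
    have hyc : y ∉ c.support := fun h => hysupp (Equiv.Perm.support_cycleOf_le σ x h)
    obtain ⟨hCcyc, hCsupp⟩ := cycle_join hcyc hxc hyc
    set C := c * Equiv.swap x y with hCdef
    set q := c.support.card with hqdef
    have hq2 : 2 ≤ q := hcyc.two_le_card_support
    have hmemf : c ∈ σ.cycleFactorsFinset :=
      Equiv.Perm.cycleOf_mem_cycleFactorsFinset_iff.mpr (Equiv.Perm.mem_support.mpr hx)
    have hdc : (σ * c⁻¹).Disjoint c :=
      Equiv.Perm.disjoint_mul_inv_of_mem_cycleFactorsFinset hmemf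
    set d := σ * c⁻¹ with hdd
    have hσeq : σ = d * c := by rw [hdd]; group
    have hτ : σ * Equiv.swap x y = d * C := by rw [hCdef, ← mul_assoc, ← hσeq]
    have hdC : d.Disjoint C := by
      intro a
      by_cases hCa : C a = a
      · exact Or.inr hCa
      · left
        have h1 : a ∈ C.support := Equiv.Perm.mem_support.mpr hCa
        rw [hCsupp, Finset.mem_insert] at h1
        rcases h1 with rfl | hac
        · show σ (c⁻¹ a) = a
          have h2 : c⁻¹ a = a := by
            rw [← Equiv.Perm.notMem_support, Equiv.Perm.support_inv]; exact hyc
          rw [h2, hy]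
        · rcases hdc a with h | h
          · exact h
          · exact absurd h (Equiv.Perm.mem_support.mp hac)
    have hctC : C.cycleType = {q + 1} := by
      have h1 := hCcyc.cycleType
      rw [hCsupp, Finset.card_insert_of_notMem hyc] at h1
      simpa using h1
    have hctc : c.cycleType = {q} := by simpa using hcyc.cycleType
    have hctσ : σ.cycleType = d.cycleType + {q} := by
      conv_lhs => rw [hσeq]
      rw [hdc.cycleType_mul, hctc]
    have hctτ : (σ * Equiv.swap x y).cycleType = d.cycleType + {q + 1} := by
      rw [hτ, hdC.cycleType_mul, hctC]
    have hdsum : d.cycleType.sum + q = s := by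
      rw [← hsumct, hctσ, Multiset.sum_add]; simp
    obtain ⟨t, ht⟩ : ∃ t, n - s = t + 1 := ⟨n - s - 1, by omega⟩
    have hρ' : ρ = q ::ₘ (d.cycleType + Multiset.replicate t 1) := by
      rw [← Multiset.cons_inj_right (1:ℕ), ← hρ]
      unfold fullCycleType
      rw [hsumct, hctσ, ht, Multiset.replicate_succ]
      simp only [← Multiset.singleton_add]
      abel
    have hqps : psize σ x = q := by unfold psize; rw [if_neg hx, ← hc, ← hqdef]
    rw [hqps, hρ', Multiset.erase_cons_head]
    unfold fullCycleType
    rw [hctτ]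
    have h2 : (d.cycleType + ({q + 1} : Multiset ℕ)).sum = s + 1 := by
      rw [Multiset.sum_add]; simp; omega
    rw [h2]
    have h3 : n - (s + 1) = t := by omega
    rw [h3]
    simp only [← Multiset.singleton_add]
    abel

lemma sum_psize {n : ℕ} (σ : Equiv.Perm (Fin n)) (F : ℕ → ℤ) :
    ∑ x : Fin n, F (psize σ x) = ((fullCycleType σ).map (fun p : ℕ => (p:ℤ) * F p)).sum := by
  have hsum : σ.cycleType.sum = σ.support.card := σ.sum_cycleType
  rw [← Finset.sum_add_sum_compl σ.support]
  have hfix : ∀ x ∈ σ.supportᶜ, F (psize σ x) = F 1 := by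
    intro x hx
    have hx' : σ x = x := by simpa [Equiv.Perm.mem_support] using hx
    have h : psize σ x = 1 := if_pos hx'
    rw [h]
  have h1 : ∑ x ∈ σ.supportᶜ, F (psize σ x) = (n - σ.support.card : ℕ) • F 1 := by
    rw [Finset.sum_congr rfl hfix, Finset.sum_const, Finset.card_compl, Fintype.card_fin]
  have hb : σ.support = σ.cycleFactorsFinset.biUnion Equiv.Perm.support := by
    ext z
    simp only [Finset.mem_biUnion]
    exact Equiv.Perm.mem_support_iff_mem_support_of_mem_cycleFactorsFinset
  have hdisj : (σ.cycleFactorsFinset : Set (Equiv.Perm (Fin n))).PairwiseDisjoint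
      Equiv.Perm.support := by
    intro c1 h1 c2 h2 hne
    exact (σ.cycleFactorsFinset_pairwise_disjoint h1 h2 hne).disjoint_support
  have h2 : ∑ x ∈ σ.support, F (psize σ x)
      = ∑ c ∈ σ.cycleFactorsFinset, (c.support.card : ℤ) * F c.support.card := by
    rw [hb, Finset.sum_biUnion hdisj]
    refine Finset.sum_congr rfl fun c hc => ?_
    have hinner : ∀ x ∈ c.support, F (psize σ x) = F c.support.card := by
      intro x hxc
      have hxs : x ∈ σ.support := Equiv.Perm.mem_cycleFactorsFinset_support_le hc hxc
      have hxne : σ x ≠ x := Equiv.Perm.mem_support.mp hxs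
      have hco : c = σ.cycleOf x := Equiv.Perm.cycle_is_cycleOf hxc hc
      have h : psize σ x = c.support.card := by
        unfold psize; rw [if_neg hxne, ← hco]
      rw [h]
    rw [Finset.sum_congr rfl hinner, Finset.sum_const, nsmul_eq_mul]
  rw [h1, h2]
  unfold fullCycleType
  rw [Multiset.map_add, Multiset.sum_add, Multiset.map_replicate, Multiset.sum_replicate,
    hsum, Equiv.Perm.cycleType_def, Multiset.map_map]
  rw [Finset.sum_eq_multiset_sum]
  simp [Function.comp]

lemma cycleType_viaEmbedding {m n : ℕ} (e : Fin m ↪ Fin n) (σ : Equiv.Perm (Fin m)) :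
    (σ.viaEmbedding e).cycleType = σ.cycleType := by
  unfold Equiv.Perm.viaEmbedding
  exact @Equiv.Perm.cycleType_extendDomain (Fin m) _ _ (Fin n) _ _ _
    (fun a => Classical.propDecidable _) (Equiv.ofInjective e.1 e.2) σ

lemma exists_perm_fullCycleType :
    ∀ (ρ : Multiset ℕ) (m : ℕ), (∀ p ∈ ρ, 1 ≤ p) → ρ.sum = m →
    ∃ σ : Equiv.Perm (Fin m), fullCycleType σ = ρ := by
  intro ρ
  induction ρ using Multiset.induction_on with
  | empty =>
    intro m _ hm
    simp only [Multiset.sum_zero] at hm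
    subst hm
    exact ⟨1, by simp [fullCycleType, Equiv.Perm.cycleType_one]⟩
  | cons p ρ' ih =>
    intro m hpos hm
    rw [Multiset.sum_cons] at hm
    subst hm
    obtain ⟨σ', hσ'⟩ := ih ρ'.sum (fun q hq => hpos q (Multiset.mem_cons_of_mem hq)) rfl
    have hs'le : σ'.cycleType.sum ≤ ρ'.sum := by
      rw [Equiv.Perm.sum_cycleType]
      simpa using Finset.card_le_univ σ'.support
    have hp1 : 1 ≤ p := hpos p (Multiset.mem_cons_self p ρ')
    set τ : Equiv.Perm (Fin p) := if 2 ≤ p then finRotate p else 1 with hτdef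
    have hτct : τ.cycleType = if 2 ≤ p then ({p} : Multiset ℕ) else 0 := by
      by_cases h : 2 ≤ p
      · rw [hτdef, if_pos h, if_pos h, cycleType_finRotate_of_le h]
      · rw [hτdef, if_neg h, if_neg h, Equiv.Perm.cycleType_one]
    set A := τ.viaEmbedding (Fin.castAddEmb ρ'.sum) with hAdef
    set B := σ'.viaEmbedding (Fin.natAddEmb p) with hBdef
    have hAB : A.Disjoint B := by
      intro z
      by_cases hz : (z : ℕ) < p
      · right
        apply Equiv.Perm.viaEmbedding_apply_of_notMem
        rintro ⟨i, rfl⟩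
        change p + (i : ℕ) < p at hz; omega
      · left
        apply Equiv.Perm.viaEmbedding_apply_of_notMem
        rintro ⟨i, rfl⟩
        exact hz (by simpa [Fin.castAddEmb] using i.isLt)
    refine ⟨A * B, ?_⟩
    have hctA : A.cycleType = τ.cycleType := cycleType_viaEmbedding _ _
    have hctB : B.cycleType = σ'.cycleType := cycleType_viaEmbedding _ _
    have hct : (A * B).cycleType = τ.cycleType + σ'.cycleType := by
      rw [hAB.cycleType_mul, hctA, hctB]
    unfold fullCycleType
    rw [hct, hτct]
    conv_rhs => rw [← hσ']
    unfold fullCycleType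
    by_cases h : 2 ≤ p
    · rw [if_pos h]
      have h1 : ({p} + σ'.cycleType).sum = p + σ'.cycleType.sum := by
        rw [Multiset.sum_add]; simp
      rw [h1]
      have h2 : p + ρ'.sum - (p + σ'.cycleType.sum) = ρ'.sum - σ'.cycleType.sum := by omega
      rw [h2]
      simp only [← Multiset.singleton_add]
      abel
    · have hpeq : p = 1 := by omega
      rw [if_neg h, zero_add]
      have h2 : p + ρ'.sum - σ'.cycleType.sum = (ρ'.sum - σ'.cycleType.sum) + 1 := by omega
      rw [h2, Multiset.replicate_succ, hpeq]
      simp only [← Multiset.singleton_add]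
      abel

lemma viaEmbedding_swap {m n : ℕ} (e : Fin m ↪ Fin n) (a b : Fin m) :
    (Equiv.swap a b).viaEmbedding e = Equiv.swap (e a) (e b) := by
  ext x
  by_cases hx : x ∈ Set.range e
  · obtain ⟨c, rfl⟩ := hx
    rw [Equiv.Perm.viaEmbedding_apply]
    rcases eq_or_ne c a with rfl | hca
    · simp
    rcases eq_or_ne c b with rfl | hcb
    · simp
    · rw [Equiv.swap_apply_of_ne_of_ne hca hcb,
        Equiv.swap_apply_of_ne_of_ne (fun h => hca (e.injective h)) fun h => hcb (e.injective h)]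
  · rw [Equiv.Perm.viaEmbedding_apply_of_notMem _ _ x hx,
      Equiv.swap_apply_of_ne_of_ne (fun h => hx ⟨a, h.symm⟩) fun h => hx ⟨b, h.symm⟩]

noncomputable def Phi (m : ℕ) :
    MonoidAlgebra ℤ (Equiv.Perm (Fin m)) →+* MonoidAlgebra ℤ (Equiv.Perm (Fin (m+1))) :=
  MonoidAlgebra.mapDomainRingHom ℤ
    (Equiv.Perm.viaEmbeddingHom (Fin.castSuccEmb : Fin m ↪ Fin (m+1)))

lemma Phi_of {m : ℕ} (g : Equiv.Perm (Fin m)) :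
    Phi m (MonoidAlgebra.of ℤ (Equiv.Perm (Fin m)) g)
      = MonoidAlgebra.of ℤ (Equiv.Perm (Fin (m+1)))
          (g.viaEmbedding (Fin.castSuccEmb : Fin m ↪ Fin (m+1))) := by
  unfold Phi
  rw [MonoidAlgebra.mapDomainRingHom_apply]
  show MonoidAlgebra.mapDomain _ (MonoidAlgebra.single g 1) = MonoidAlgebra.single _ 1
  rw [MonoidAlgebra.mapDomain_single]
  rfl

lemma coeffOf_Phi {m : ℕ} (x : MonoidAlgebra ℤ (Equiv.Perm (Fin m))) (σ' : Equiv.Perm (Fin m)) :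
    coeffOf (Phi m x)
      (σ'.viaEmbedding (Fin.castSuccEmb : Fin m ↪ Fin (m+1))) = coeffOf x σ' := by
  unfold coeffOf Phi
  rw [MonoidAlgebra.mapDomainRingHom_apply]
  exact Finsupp.mapDomain_apply (Equiv.Perm.viaEmbeddingHom_injective _) x.coeff σ'

lemma Phi_JM {m : ℕ} (i : Fin m) : Phi m (JM m i) = JM (m+1) i.castSucc := by
  unfold JM
  rw [map_sum]
  have h1 : ∀ j : Fin m, Phi m (MonoidAlgebra.of ℤ _ (Equiv.swap j i))
      = MonoidAlgebra.of ℤ (Equiv.Perm (Fin (m+1))) (Equiv.swap j.castSucc i.castSucc) := by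
    intro j
    rw [Phi_of, viaEmbedding_swap]
    rfl
  rw [Finset.sum_congr rfl fun j _ => h1 j]
  refine Finset.sum_bij (fun j _ => j.castSucc) ?_ ?_ ?_ ?_
  · intro j hj
    simp only [Finset.mem_filter, Finset.mem_univ, true_and] at hj ⊢
    exact Fin.castSucc_lt_castSucc_iff.mpr hj
  · intro j1 h1' j2 h2' h
    exact Fin.castSucc_injective _ h
  · intro j' hj'
    simp only [Finset.mem_filter, Finset.mem_univ, true_and] at hj'
    have hlt : (j' : ℕ) < m := by
      have := hj'.trans_le (Fin.le_last _)
      have h2 : (j' : ℕ) < (i.castSucc : ℕ) := hj'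
      have h3 : ((i.castSucc : Fin (m+1)) : ℕ) = (i : ℕ) := rfl
      omega
    refine ⟨⟨(j' : ℕ), hlt⟩, ?_, ?_⟩
    · simp only [Finset.mem_filter, Finset.mem_univ, true_and]
      have h2 : (j' : ℕ) < (i : ℕ) := hj'
      exact h2
    · ext; simp
  · intro j hj; rfl

lemma hEval_succ_decomp (m k' : ℕ) :
    hEval (k'+1) (JM (m+1)) =
      Phi m (hEval (k'+1) (JM m))
        + hEval k' (JM (m+1)) * JM (m+1) (Fin.last m) := by
  have hPhi : Phi m (∑ f ∈ Finset.univ.filter (fun f : Fin (k'+1) → Fin m => Monotone f),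
        (List.ofFn (fun t => JM m (f t))).prod) =
      ∑ f ∈ Finset.univ.filter (fun f : Fin (k'+1) → Fin m => Monotone f),
        (List.ofFn (fun t => JM (m+1) ((f t).castSucc))).prod := by
    rw [map_sum]
    refine Finset.sum_congr rfl fun f _ => ?_
    rw [map_list_prod (Phi m), List.map_ofFn]
    show (List.ofFn fun t => Phi m (JM m (f t))).prod
        = (List.ofFn fun t => JM (m+1) (f t).castSucc).prod
    exact congrArg List.prod (congrArg List.ofFn (funext fun t => Phi_JM (f t)))
  unfold hEval
  rw [← Finset.sum_filter_add_sum_filter_not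
    (Finset.univ.filter (fun f : Fin (k'+1) → Fin (m+1) => Monotone f))
    (fun f => ∀ t, f t ≠ Fin.last m)]
  congr 1
  · -- restricted part = Phi of smaller hEval
    rw [hPhi]
    refine (Finset.sum_bij (fun (f : Fin (k'+1) → Fin m) _ => Fin.castSucc ∘ f) ?_ ?_ ?_ ?_).symm
    · intro f hf
      simp only [Finset.mem_filter, Finset.mem_univ, true_and] at hf ⊢
      constructor
      · intro a b hab
        exact Fin.castSucc_le_castSucc_iff.mpr (hf hab)
      · intro t
        exact (Fin.castSucc_lt_last (f t)).ne
    · intro f1 h1' f2 h2' h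
      funext t
      exact Fin.castSucc_injective _ (congrFun h t)
    · intro F hF
      simp only [Finset.mem_filter, Finset.mem_univ, true_and] at hF
      obtain ⟨hmono, hne⟩ := hF
      refine ⟨fun t => (F t).castPred (hne t), ?_, ?_⟩
      · simp only [Finset.mem_filter, Finset.mem_univ, true_and]
        intro a b hab
        rw [← Fin.castSucc_le_castSucc_iff]
        simpa [Fin.castSucc_castPred] using hmono hab
      · funext t
        simp [Fin.castSucc_castPred]
    · intro f hf; rfl
  · -- top part
    rw [Finset.sum_mul]
    refine Finset.sum_bij (fun (F : Fin (k'+1) → Fin (m+1)) _ => F ∘ Fin.castSucc) ?_ ?_ ?_ ?_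
    · intro F hF
      simp only [Finset.mem_filter, Finset.mem_univ, true_and] at hF ⊢
      exact hF.1.comp fun a b hab => Fin.castSucc_le_castSucc_iff.mpr hab
    · intro F1 hF1 F2 hF2 h
      simp only [Finset.mem_filter, Finset.mem_univ, true_and, not_forall, not_ne_iff] at hF1 hF2
      have hl1 : F1 (Fin.last k') = Fin.last m := by
        obtain ⟨t, ht⟩ := hF1.2
        exact le_antisymm (Fin.le_last _) (ht ▸ hF1.1 (Fin.le_last t))
      have hl2 : F2 (Fin.last k') = Fin.last m := by
        obtain ⟨t, ht⟩ := hF2.2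
        exact le_antisymm (Fin.le_last _) (ht ▸ hF2.1 (Fin.le_last t))
      funext t
      induction t using Fin.lastCases with
      | last => rw [hl1, hl2]
      | cast t => exact congrFun h t
    · intro g hg
      simp only [Finset.mem_filter, Finset.mem_univ, true_and] at hg
      refine ⟨Fin.snoc g (Fin.last m), ?_, ?_⟩
      · simp only [Finset.mem_filter, Finset.mem_univ, true_and, not_forall, not_ne_iff]
        constructor
        · intro a b hab
          induction b using Fin.lastCases with
          | last => rw [Fin.snoc_last]; exact Fin.le_last _
          | cast b =>
            induction a using Fin.lastCases with
            | last =>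
              exact absurd (hab.trans_lt (Fin.castSucc_lt_last b)) (lt_irrefl _)
            | cast a =>
              rw [Fin.snoc_castSucc, Fin.snoc_castSucc]
              exact hg (Fin.castSucc_le_castSucc_iff.mp hab)
        · exact ⟨Fin.last k', Fin.snoc_last _ _⟩
      · funext t
        simp [Fin.snoc_castSucc]
    · intro F hF
      simp only [Finset.mem_filter, Finset.mem_univ, true_and, not_forall, not_ne_iff] at hF
      have hl : F (Fin.last k') = Fin.last m := by
        obtain ⟨t, ht⟩ := hF.2
        exact le_antisymm (Fin.le_last _) (ht ▸ hF.1 (Fin.le_last t))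
      rw [List.ofFn_succ' (fun t => JM (m+1) (F t)), List.prod_concat, hl]
      rfl

end AuxLemmas

/-- Lassalle's first induction: `a^k_{ρ∪(1)} = a^k_ρ + Σ_i ρ_i a^{k-1}_{ρ\(ρ_i)∪(ρ_i+1)}`,
where `a^k_λ` is the coefficient of any permutation of cycle type `λ` in
`h_k(J_1,…,J_n)` (partitions are encoded as multisets of parts). -/
lemma fullCycleType_viaEmbedding {m : ℕ} (σ' : Equiv.Perm (Fin m)) :
    fullCycleType (σ'.viaEmbedding (Fin.castSuccEmb : Fin m ↪ Fin (m+1)))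
      = 1 ::ₘ fullCycleType σ' := by
  unfold fullCycleType
  rw [cycleType_viaEmbedding]
  have hle : σ'.cycleType.sum ≤ m := by
    rw [Equiv.Perm.sum_cycleType]; simpa using Finset.card_le_univ σ'.support
  have h : m + 1 - σ'.cycleType.sum = (m - σ'.cycleType.sum) + 1 := by omega
  rw [h, Multiset.replicate_succ]
  simp only [← Multiset.singleton_add]
  abel

theorem lassalle_first_induction (a : ℕ → Multiset ℕ → ℤ)
    (ha : ∀ (N k : ℕ) (σ : Equiv.Perm (Fin N)),
      coeffOf (hEval k (JM N)) σ = a k (fullCycleType σ))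
    (k : ℕ) (hk : 1 ≤ k) (ρ : Multiset ℕ) (hρ : ∀ p ∈ ρ, 1 ≤ p) :
    a k (1 ::ₘ ρ) =
      a k ρ + (ρ.map (fun (p : ℕ) => (p : ℤ) * a (k-1) ((p+1) ::ₘ ρ.erase p))).sum := by
  obtain ⟨k', rfl⟩ : ∃ k', k = k' + 1 := ⟨k - 1, by omega⟩
  simp only [Nat.add_sub_cancel]
  set F : ℕ → ℤ := fun p => a k' ((p+1) ::ₘ ρ.erase p) with hFdef
  set m := ρ.sum with hmdef
  obtain ⟨σ', hσ'⟩ := exists_perm_fullCycleType ρ m hρ rfl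
  set σ := σ'.viaEmbedding (Fin.castSuccEmb : Fin m ↪ Fin (m+1)) with hσdef
  have hσfull : fullCycleType σ = 1 ::ₘ ρ := by
    rw [hσdef, fullCycleType_viaEmbedding, hσ']
  have hσlast : σ (Fin.last m) = Fin.last m := by
    apply Equiv.Perm.viaEmbedding_apply_of_notMem
    rintro ⟨i, hi⟩
    exact absurd hi (Fin.castSucc_lt_last i).ne
  -- left hand side
  have hL : a (k'+1) (1 ::ₘ ρ) = coeffOf (hEval (k'+1) (JM (m+1))) σ := by
    rw [ha, hσfull]
  -- split
  have hsplit : coeffOf (hEval (k'+1) (JM (m+1))) σ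
      = coeffOf (Phi m (hEval (k'+1) (JM m))) σ
        + coeffOf (hEval k' (JM (m+1)) * JM (m+1) (Fin.last m)) σ := by
    rw [hEval_succ_decomp]
    unfold coeffOf; rw [MonoidAlgebra.coeff_add]; rfl
  -- first summand
  have hterm1 : coeffOf (Phi m (hEval (k'+1) (JM m))) σ = a (k'+1) ρ := by
    rw [hσdef, coeffOf_Phi, ha, hσ']
  -- second summand
  have hterm2 : coeffOf (hEval k' (JM (m+1)) * JM (m+1) (Fin.last m)) σ
      = ∑ j ∈ Finset.univ.filter (fun j : Fin (m+1) => j < Fin.last m), F (psize σ j) := by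
    unfold JM coeffOf
    rw [Finset.mul_sum, MonoidAlgebra.coeff_sum, Finset.sum_apply']
    refine Finset.sum_congr rfl fun j hj => ?_
    have hjlt : j < Fin.last m := by
      simpa using (Finset.mem_filter.mp hj).2
    show (hEval k' (JM (m+1)) * MonoidAlgebra.single (Equiv.swap j (Fin.last m)) (1:ℤ)).coeff σ = _
    rw [MonoidAlgebra.coeff_mul_single_apply, mul_one, Equiv.swap_inv]
    have h1 := ha (m+1) k' (σ * Equiv.swap j (Fin.last m))
    unfold coeffOf at h1
    rw [h1, fullCycleType_mul_swap hjlt.ne hσlast hσfull]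
  -- counting
  have hcount := sum_psize σ F
  have hfilter : Finset.univ.filter (fun j : Fin (m+1) => j < Fin.last m)
      = Finset.univ.erase (Fin.last m) := by
    ext j
    simp only [Finset.mem_filter, Finset.mem_univ, true_and, Finset.mem_erase, and_true]
    rw [← Fin.top_eq_last, lt_top_iff_ne_top]
  have hlast1 : psize σ (Fin.last m) = 1 := if_pos hσlast
  have hsum2 : ∑ j ∈ Finset.univ.filter (fun j : Fin (m+1) => j < Fin.last m), F (psize σ j)
      = (ρ.map (fun p : ℕ => (p:ℤ) * F p)).sum := by
    have h2 : (∑ j ∈ Finset.univ.erase (Fin.last m), F (psize σ j)) + F (psize σ (Fin.last m))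
        = ∑ j : Fin (m+1), F (psize σ j) :=
      Finset.sum_erase_add _ _ (Finset.mem_univ _)
    rw [hfilter]
    rw [hcount, hσfull, Multiset.map_cons, Multiset.sum_cons, hlast1] at h2
    push_cast at h2 ⊢
    linarith
  rw [hL, hsplit, hterm1, hterm2, hsum2]
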